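/- Let S be a positive integer, a ∈ ℝ^S with a_s > 0 for all s, b, c ∈ ℝ^S, and ρ > 0. Then for every α ∈ ℝ there exists a unique γ ∈ ℝ such that Σ_{s=1}^S a_s · max(−b_s α + γ + c_s, 0) = ρ. -/
import Mathlib


open scoped BigOperators

/-- Existence and uniqueness of the solution `γ` of the nonlinear equation
`a^T [−bα + γe + c]_+ = ρ` for every fixed `α`. -/
theorem stmt7 (S : ℕ) (hS : 0 < S)
    (a : Fin S → ℝ) (ha : ∀ s, 0 < a s)
    (b c : Fin S → ℝ) (ρ : ℝ) (hρ : 0 < ρ) (α : ℝ) :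
    ∃! γ : ℝ, ∑ s, a s * max (-(b s) * α + γ + c s) 0 = ρ := by
  let f : ℝ → ℝ := fun γ => ∑ s, a s * max (-(b s) * α + γ + c s) 0
  show ∃! γ : ℝ, f γ = ρ
  have hcont : Continuous f := by
    apply continuous_finset_sum
    intro s _
    exact continuous_const.mul
      (((continuous_const.add continuous_id').add continuous_const).max continuous_const)
  have hstrict : ∀ {γ1 γ2 : ℝ}, γ1 < γ2 → f γ1 = ρ → f γ1 < f γ2 := by
    intro γ1 γ2 h hρ1
    have hex : ∃ s : Fin S, 0 < -(b s) * α + γ1 + c s := by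
      by_contra hc
      push_neg at hc
      have hz : f γ1 = 0 := Finset.sum_eq_zero fun s _ => by
        rw [max_eq_right (hc s), mul_zero]
      rw [hρ1] at hz; linarith
    obtain ⟨s0, hs0⟩ := hex
    apply Finset.sum_lt_sum
    · intro s _
      exact mul_le_mul_of_nonneg_left (max_le_max (by linarith) le_rfl) (ha s).le
    · refine ⟨s0, Finset.mem_univ s0, ?_⟩
      apply mul_lt_mul_of_pos_left _ (ha s0)
      rw [max_eq_left hs0.le, max_eq_left (by linarith)]
      linarith
  obtain ⟨s0⟩ : Nonempty (Fin S) := ⟨⟨0, hS⟩⟩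
  set γhi : ℝ := b s0 * α - c s0 + ρ / a s0 with hγhi
  have hfhi : ρ ≤ f γhi := by
    have h1 : a s0 * max (-(b s0) * α + γhi + c s0) 0 = ρ := by
      have he : -(b s0) * α + γhi + c s0 = ρ / a s0 := by rw [hγhi]; ring
      rw [he, max_eq_left (le_of_lt (div_pos hρ (ha s0))), mul_div_cancel₀ _ (ha s0).ne']
    calc ρ = a s0 * max (-(b s0) * α + γhi + c s0) 0 := h1.symm
      _ ≤ f γhi := Finset.single_le_sum (f := fun s => a s * max (-(b s) * α + γhi + c s) 0)
          (fun s _ => mul_nonneg (ha s).le (le_max_right _ _)) (Finset.mem_univ s0)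
  set γlo : ℝ := Finset.univ.inf' ⟨s0, Finset.mem_univ s0⟩ (fun s => b s * α - c s) with hγlo
  have hflo : f γlo = 0 := Finset.sum_eq_zero fun s _ => by
    have hle : γlo ≤ b s * α - c s := Finset.inf'_le _ (Finset.mem_univ s)
    rw [max_eq_right (by linarith), mul_zero]
  have hmem : ρ ∈ Set.uIcc (f γlo) (f γhi) := by
    rw [hflo]
    exact Set.mem_uIcc.2 (Or.inl ⟨hρ.le, hfhi⟩)
  obtain ⟨γ, _, hγ⟩ := intermediate_value_uIcc hcont.continuousOn hmem
  refine ⟨γ, hγ, ?_⟩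
  intro y hy
  by_contra hne
  rcases lt_or_gt_of_ne hne with h | h
  · have := hstrict h hy
    rw [hy, hγ] at this
    exact lt_irrefl _ this
  · have := hstrict h hγ
    rw [hy, hγ] at this
    exact lt_irrefl _ this
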